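/- Let V and L be real Hilbert spaces, a : L × V → ℝ a continuous bilinear form satisfying the inf-sup condition sup_{v ∈ L, v ≠ 0} a(v,u)/‖v‖ ≥ α‖u‖ for all u ∈ V (with α > 0), and suppose the only v ∈ L with a(v,u) = 0 for all u ∈ V is v = 0. Then for every continuous linear functional l on L there exists a unique u ∈ V with a(v,u) = l(v) for all v ∈ L, and ‖u‖ ≤ (1/α)‖l‖. -/

import Mathlib

open RealInnerProductSpace NNReal

/-- Nečas' theorem (Banach–Nečas–Babuška) in real Hilbert spaces: if the continuous
bilinear form `a` satisfies the inf-sup condition with constant `α > 0` and the only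
`v` annihilating `a(v, ·)` is `v = 0`, then for every continuous linear functional `l`
on `L` the variational problem has a unique solution `u` with `‖u‖ ≤ (1/α)‖l‖`. -/
theorem necas_wellposedness {L V : Type*}
    [NormedAddCommGroup L] [InnerProductSpace ℝ L] [CompleteSpace L]
    [NormedAddCommGroup V] [InnerProductSpace ℝ V] [CompleteSpace V]
    (a : L →L[ℝ] V →L[ℝ] ℝ) (α : ℝ) (hα : 0 < α)
    (hinf : ∀ u : V, α * ‖u‖ ≤ ⨆ v : L, a v u / ‖v‖)
    (hker : ∀ v : L, (∀ u : V, a v u = 0) → v = 0)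
    (l : L →L[ℝ] ℝ) :
    ∃ u : V, (∀ v : L, a v u = l v) ∧ ‖u‖ ≤ (1 / α) * ‖l‖ ∧
      ∀ u' : V, (∀ v : L, a v u' = l v) → u' = u := by
  set d := InnerProductSpace.toDual ℝ L with hd
  -- T u is the Riesz representative of v ↦ a v u
  set T : V →L[ℝ] L := (d.symm.toContinuousLinearEquiv : (L →L[ℝ] ℝ) ≃L[ℝ] L).toContinuousLinearMap.comp a.flip with hT
  have hTapp : ∀ (u : V) (v : L), (inner ℝ (T u) v : ℝ) = a v u := by
    intro u v
    simp [hT, hd, InnerProductSpace.toDual_symm_apply]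
  -- lower bound: α ‖u‖ ≤ ‖T u‖
  have hlow : ∀ u : V, α * ‖u‖ ≤ ‖T u‖ := by
    intro u
    refine (hinf u).trans ?_
    refine ciSup_le fun v => ?_
    rcases eq_or_ne v 0 with rfl | hv
    · simp
    · rw [div_le_iff₀ (norm_pos_iff.2 hv)]
      calc a v u = (inner ℝ (T u) v : ℝ) := (hTapp u v).symm
        _ ≤ ‖T u‖ * ‖v‖ := real_inner_le_norm _ _
  have hinj : ∀ u : V, T u = 0 → u = 0 := by
    intro u hu
    have h1 := hlow u
    rw [hu, norm_zero] at h1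
    have h2 : ‖u‖ ≤ 0 := by nlinarith [norm_nonneg u]
    simpa using le_antisymm h2 (norm_nonneg u)
  -- T is antilipschitz, hence has closed range
  have hanti : AntilipschitzWith (⟨α, hα.le⟩ : ℝ≥0)⁻¹ T := by
    refine ContinuousLinearMap.antilipschitz_of_bound T fun x => ?_
    change ‖x‖ ≤ α⁻¹ * ‖T x‖
    rw [← div_eq_inv_mul, le_div_iff₀ hα, mul_comm]
    exact hlow x
  have hclosed : IsClosed (Set.range T) :=
    hanti.isClosed_range T.uniformContinuous
  -- the range as a submodule
  set K : Submodule ℝ L := LinearMap.range (T : V →ₗ[ℝ] L) with hK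
  have hKclosed : IsClosed (K : Set L) := by
    have : (K : Set L) = Set.range T := by
      ext x; simp [hK, LinearMap.mem_range]
    rw [this]; exact hclosed
  haveI : CompleteSpace K := hKclosed.completeSpace_coe
  -- orthogonal complement trivial
  have horth : Kᗮ = ⊥ := by
    rw [Submodule.eq_bot_iff]
    intro v hv
    refine hker v fun u => ?_
    have := hv (T u) ⟨u, rfl⟩
    rw [← hTapp u v]
    exact this
  have hKtop : K = ⊤ := by
    have := Submodule.orthogonal_orthogonal K
    rw [horth, Submodule.bot_orthogonal_eq_top] at this
    exact this.symm
  -- solve T u = Riesz representative of l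
  have hw : (d.symm l : L) ∈ K := hKtop ▸ Submodule.mem_top
  obtain ⟨u, hu : T u = d.symm l⟩ := hw
  refine ⟨u, fun v => ?_, ?_, ?_⟩
  · rw [← hTapp u v, hu, hd, InnerProductSpace.toDual_symm_apply]
  · have h1 := hlow u
    rw [hu] at h1
    have h2 : ‖(d.symm l : L)‖ = ‖l‖ := d.symm.norm_map l
    rw [h2] at h1
    rw [one_div, ← div_eq_inv_mul, le_div_iff₀ hα, mul_comm]
    exact h1
  · intro u' hu'
    have hz : T u' = T u := by
      apply ext_inner_right ℝ
      intro v
      rw [hTapp, hTapp, hu', ← hTapp u v, hu, hd, InnerProductSpace.toDual_symm_apply]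
    have : T (u' - u) = 0 := by rw [map_sub, hz, sub_self]
    have := hinj _ this
    exact sub_eq_zero.mp this
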